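/- arXiv:0909.2409 — 6 statements merged into one kernel-verified Lean document; each statement's English description precedes it below -/
import Mathlib

section
/- Every ℝ-algebra automorphism σ of ℍ is inner by a unit quaternion: there exists a unit quaternion a such that σ(x) = a x a⁻¹ for all x ∈ ℍ. -/
open Quaternion

def mkQ (a b c d : ℝ) : ℍ := ⟨a,b,c,d⟩
@[simp] lemma re_mkQ (a b c d : ℝ) : (mkQ a b c d).re = a := rfl
@[simp] lemma imI_mkQ (a b c d : ℝ) : (mkQ a b c d).imI = b := rfl
@[simp] lemma imJ_mkQ (a b c d : ℝ) : (mkQ a b c d).imJ = c := rfl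
@[simp] lemma imK_mkQ (a b c d : ℝ) : (mkQ a b c d).imK = d := rfl

def eI : ℍ := mkQ 0 1 0 0
def eJ : ℍ := mkQ 0 0 1 0
def eK : ℍ := mkQ 0 0 0 1

noncomputable section
lemma L1 (p : ℍ) (h : p * p = -1) : p.re = 0 ∧ p.imI^2+p.imJ^2+p.imK^2 = 1 := by
  rw [Quaternion.ext_iff] at h
  simp only [Quaternion.re_mul, Quaternion.imI_mul, Quaternion.imJ_mul, Quaternion.imK_mul,
    Quaternion.re_neg, Quaternion.imI_neg, Quaternion.imJ_neg, Quaternion.imK_neg,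
    Quaternion.re_one, Quaternion.imI_one, Quaternion.imJ_one, Quaternion.imK_one] at h
  obtain ⟨h1, h2, h3, h4⟩ := h
  have hr : p.re = 0 := by
    by_contra hr
    have hx : p.imI = 0 := by
      have : p.re * p.imI = 0 := by linarith
      exact (mul_eq_zero.mp this).resolve_left hr
    have hy : p.imJ = 0 := by
      have : p.re * p.imJ = 0 := by linarith
      exact (mul_eq_zero.mp this).resolve_left hr
    have hz : p.imK = 0 := by
      have : p.re * p.imK = 0 := by linarith
      exact (mul_eq_zero.mp this).resolve_left hr
    nlinarith
  exact ⟨hr, by nlinarith⟩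


lemma Lexist1 (p : ℍ) (hre : p.re = 0) (hn : p.imI^2+p.imJ^2+p.imK^2 = 1) :
    ∃ a : ℍ, normSq a = 1 ∧ a * eI = p * a := by
  by_cases hx : p.imI = -1
  · have hy : p.imJ = 0 := by nlinarith
    have hz : p.imK = 0 := by nlinarith
    refine ⟨mkQ 0 0 1 0, ?_, ?_⟩
    · simp [Quaternion.normSq_def']
    · ext <;> simp [eI, eJ, eK, Quaternion.re_mul, Quaternion.imI_mul, Quaternion.imJ_mul,
        Quaternion.imK_mul, hre, hx, hy, hz]
  · have hx1 : -1 < p.imI := by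
      rcases lt_or_eq_of_le (by nlinarith : -1 ≤ p.imI) with h | h
      · exact h
      · exact absurd h.symm hx
    set n : ℝ := Real.sqrt (2 + 2 * p.imI) with hndef
    have hn2 : n^2 = 2 + 2 * p.imI := Real.sq_sqrt (by linarith)
    have hnpos : 0 < n := Real.sqrt_pos.mpr (by linarith)
    refine ⟨(n⁻¹ : ℝ) • mkQ (1 + p.imI) 0 (-p.imK) p.imJ, ?_, ?_⟩
    · rw [Quaternion.normSq_def']
      simp only [Quaternion.re_smul, Quaternion.imI_smul, Quaternion.imJ_smul,
        Quaternion.imK_smul, smul_eq_mul, re_mkQ, imI_mkQ, imJ_mkQ, imK_mkQ]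
      field_simp
      nlinarith
    · ext <;>
        simp only [eI, eJ, eK, Quaternion.re_mul, Quaternion.imI_mul, Quaternion.imJ_mul,
          Quaternion.imK_mul, Quaternion.re_smul, Quaternion.imI_smul, Quaternion.imJ_smul,
          Quaternion.imK_smul, smul_eq_mul, hre, re_mkQ, imI_mkQ, imJ_mkQ, imK_mkQ] <;>
        field_simp <;> nlinarith

lemma Lexist2 (q : ℍ) (hre : q.re = 0) (hi0 : q.imI = 0) (hn : q.imJ^2 + q.imK^2 = 1) :
    ∃ b : ℍ, normSq b = 1 ∧ b * eI = eI * b ∧ b * eJ = q * b := by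
  by_cases hy : q.imJ = -1
  · have hz : q.imK = 0 := by nlinarith
    refine ⟨mkQ 0 1 0 0, by simp [Quaternion.normSq_def'], by ext <;> simp [eI], ?_⟩
    ext <;> simp [eI, eJ, eK, Quaternion.re_mul, Quaternion.imI_mul, Quaternion.imJ_mul,
      Quaternion.imK_mul, hre, hi0, hy, hz]
  · have hy1 : -1 < q.imJ := by
      rcases lt_or_eq_of_le (by nlinarith : -1 ≤ q.imJ) with h | h
      · exact h
      · exact absurd h.symm hy
    set c : ℝ := Real.sqrt ((1 + q.imJ)/2) with hcdef
    have hc2 : c^2 = (1 + q.imJ)/2 := Real.sq_sqrt (by linarith)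
    have hcpos : 0 < c := Real.sqrt_pos.mpr (by linarith)
    set s : ℝ := q.imK / (2 * c) with hsdef
    have hcs : 2 * c * s = q.imK := by rw [hsdef]; field_simp
    have hunit : c^2 + s^2 = 1 := by
      rw [hsdef]; field_simp; nlinarith
    have hdiff : c^2 - s^2 = q.imJ := by nlinarith
    refine ⟨mkQ c s 0 0, ?_, ?_, ?_⟩
    · rw [Quaternion.normSq_def']; simpa using hunit
    · ext <;> simp [eI, eJ, eK, Quaternion.re_mul, Quaternion.imI_mul, Quaternion.imJ_mul,
        Quaternion.imK_mul]
    · ext <;>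
        simp only [eI, eJ, eK, Quaternion.re_mul, Quaternion.imI_mul, Quaternion.imJ_mul,
          Quaternion.imK_mul, hre, hi0, re_mkQ, imI_mkQ, imJ_mkQ, imK_mkQ]
      · ring
      · ring
      · linear_combination c*hdiff + s*hcs - c*hunit
      · linear_combination -s*hdiff + c*hcs - s*hunit


lemma basic_eIJK : eI * eJ = eK ∧ eI * eI = (-1 : ℍ) ∧ eI * eJ = -(eJ * eI) := by
  refine ⟨?_, ?_, ?_⟩ <;> ext <;> simp [eI, eJ, eK, Quaternion.re_mul, Quaternion.imI_mul,
    Quaternion.imJ_mul, Quaternion.imK_mul]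


lemma Lkey (σ : ℍ ≃ₐ[ℝ] ℍ) (a : ℍ) (hai : a * eI = σ eI * a) (haj : a * eJ = σ eJ * a)
    (hak : a * eK = σ eK * a) (x : ℍ) : σ x * a = a * x := by
  have hx : x = (algebraMap ℝ ℍ x.re) + x.imI • eI + x.imJ • eJ + x.imK • eK := by
    ext <;> simp [eI, eJ, eK]
  conv_lhs => rw [hx]
  conv_rhs => rw [hx]
  rw [map_add, map_add, map_add, map_smul, map_smul, map_smul, AlgEquiv.commutes]
  rw [add_mul, add_mul, add_mul, mul_add, mul_add, mul_add]
  rw [smul_mul_assoc, smul_mul_assoc, smul_mul_assoc, mul_smul_comm, mul_smul_comm,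
    mul_smul_comm, hai, haj, hak, Algebra.commutes]

/-- Every ℝ-algebra automorphism of ℍ is inner by a unit quaternion. -/
theorem quaternion_algAut_inner (σ : ℍ ≃ₐ[ℝ] ℍ) :
    ∃ a : ℍ, (a * star a).re = 1 ∧ ∀ x : ℍ, σ x = a * x * a⁻¹ := by
  obtain ⟨hIJ, hII, hanti⟩ := basic_eIJK
  set p := σ eI with hpdef
  set q := σ eJ with hqdef
  have hp2 : p * p = -1 := by
    rw [hpdef, ← map_mul, hII, map_neg, map_one]
  have hq2 : q * q = -1 := by
    have hJJ : eJ * eJ = (-1 : ℍ) := by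
      ext <;> simp [eJ, Quaternion.re_mul, Quaternion.imI_mul, Quaternion.imJ_mul,
        Quaternion.imK_mul]
    rw [hqdef, ← map_mul, hJJ, map_neg, map_one]
  have hpq : p * q = -(q * p) := by
    rw [hpdef, hqdef, ← map_mul, ← map_mul, ← map_neg, hanti]
  obtain ⟨hpre, hpn⟩ := L1 p hp2
  obtain ⟨a₁, h1n, h1i⟩ := Lexist1 p hpre hpn
  -- basic unit facts about a₁
  have hsa : a₁ * star a₁ = 1 := by rw [Quaternion.self_mul_star, h1n]; exact_mod_cast rfl
  have hsa' : star a₁ * a₁ = 1 := by rw [Quaternion.star_mul_self, h1n]; exact_mod_cast rfl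
  have hstarp : star p = -p := by
    ext <;> simp [hpre]
  have hstarI : star eI = -eI := by ext <;> simp [eI]
  have hIs : eI * star a₁ = star a₁ * p := by
    have := congrArg star h1i
    rw [star_mul, star_mul, hstarI, hstarp, neg_mul, mul_neg, neg_inj] at this
    exact this
  set q' := star a₁ * q * a₁ with hq'def
  have hq'2 : q' * q' = -1 := by
    calc q' * q' = star a₁ * (q * ((a₁ * star a₁) * q) * a₁) := by
          rw [hq'def]; simp only [mul_assoc]
      _ = star a₁ * (q * q * a₁) := by rw [hsa, one_mul]
      _ = -1 := by rw [hq2, neg_one_mul, mul_neg, hsa']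
  have hq'anti : q' * eI + eI * q' = 0 := by
    have e1 : q' * eI = star a₁ * ((q * p) * a₁) := by
      rw [hq'def]; simp only [mul_assoc, h1i]
    have e2 : eI * q' = star a₁ * ((p * q) * a₁) := by
      rw [hq'def, ← mul_assoc, ← mul_assoc, hIs]; simp only [mul_assoc]
    rw [e1, e2, ← mul_add, ← add_mul, hpq, add_neg_cancel, zero_mul, mul_zero]
  -- components of q'
  have hq'i : q'.imI = 0 ∧ q'.re = 0 := by
    rw [Quaternion.ext_iff] at hq'anti
    simp only [Quaternion.re_add, Quaternion.imI_add, Quaternion.re_mul, Quaternion.imI_mul,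
      eI, Quaternion.re_zero, Quaternion.imI_zero, re_mkQ, imI_mkQ, imJ_mkQ, imK_mkQ] at hq'anti
    obtain ⟨u1, u2, _, _⟩ := hq'anti
    constructor <;> linarith
  obtain ⟨hq'imI, hq're⟩ := hq'i
  have hq'n : q'.imJ^2 + q'.imK^2 = 1 := by
    have := congrArg QuaternionAlgebra.re hq'2
    simp only [Quaternion.re_mul, Quaternion.re_neg, Quaternion.re_one, hq're, hq'imI] at this
    nlinarith
  obtain ⟨b, hbn, hbi, hbj⟩ := Lexist2 q' hq're hq'imI hq'n
  refine ⟨a₁ * b, ?_, ?_⟩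
  · rw [Quaternion.self_mul_star]
    rw [map_mul, h1n, hbn, one_mul]
    exact_mod_cast rfl
  · set a := a₁ * b with hadef
    have han : normSq a = 1 := by rw [hadef, map_mul, h1n, hbn, one_mul]
    have ha0 : a ≠ 0 := by
      intro h
      rw [h, map_zero] at han
      exact zero_ne_one han
    have hai : a * eI = σ eI * a := by
      rw [hadef, mul_assoc, hbi, ← mul_assoc, h1i, mul_assoc]
    have haj : a * eJ = σ eJ * a := by
      have h1q : a₁ * q' = q * a₁ := by
        rw [hq'def, ← mul_assoc, ← mul_assoc, hsa, one_mul]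
      rw [hadef, mul_assoc, hbj, ← mul_assoc, h1q, mul_assoc]
    have hak : a * eK = σ eK * a := by
      rw [← hIJ, map_mul]
      calc a * (eI * eJ) = (a * eI) * eJ := (mul_assoc a eI eJ).symm
        _ = (σ eI * a) * eJ := by rw [hai]
        _ = σ eI * (a * eJ) := mul_assoc _ _ _
        _ = σ eI * (σ eJ * a) := by rw [haj]
        _ = σ eI * σ eJ * a := (mul_assoc _ _ _).symm
    intro x
    have key := Lkey σ a hai haj hak x
    rw [← key, mul_assoc, mul_inv_cancel₀ ha0, mul_one]
end
end

section
/- For every unit quaternion a, the map ρ(a) : v ↦ a v a⁻¹ maps im ℍ to itself and restricts to an ℝ-linear isometry of im ℍ; the assignment a ↦ ρ(a) is a group homomorphism from the group of unit quaternions to the group of linear isometries of im ℍ, its kernel is {1, −1}, and its image consists exactly of the linear isometries of im ℍ of determinant 1. -/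
open Quaternion

def imH : Submodule ℝ ℍ where
  carrier := {q | q.re = 0}
  add_mem' := by
    intro a b ha hb
    simp only [Set.mem_setOf_eq] at *
    simp [ha, hb]
  zero_mem' := by simp
  smul_mem' := by
    intro c a ha
    simp only [Set.mem_setOf_eq] at *
    simp [ha]

namespace QCA
noncomputable section

lemma conj_mem (a : ℍ) {v : ℍ} (hv : v ∈ imH) : a * v * star a ∈ imH := by
  have hv : v.re = 0 := hv
  show (a * v * star a).re = 0
  simp only [Quaternion.re_mul, Quaternion.imI_mul, Quaternion.imJ_mul, Quaternion.imK_mul,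
    Quaternion.re_star, Quaternion.imI_star, Quaternion.imJ_star, Quaternion.imK_star]
  linear_combination (a.re^2 + a.imI^2 + a.imJ^2 + a.imK^2) * hv

lemma unit_normSq (a : unitary ℍ) : normSq (a : ℍ) = 1 := by
  have h : star (a : ℍ) * a = 1 := Unitary.mem_iff.mp a.2 |>.1
  rw [Quaternion.star_mul_self] at h
  rw [← Quaternion.coe_one] at h
  exact Quaternion.coe_injective h

lemma unit_norm (a : unitary ℍ) : ‖(a : ℍ)‖ = 1 := by
  have := unit_normSq a
  nlinarith [Quaternion.normSq_eq_norm_mul_self (a : ℍ), norm_nonneg (a : ℍ)]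

def conjMap (a : unitary ℍ) : imH ≃ₗᵢ[ℝ] imH where
  toLinearEquiv :=
  { toFun := fun v => ⟨(a : ℍ) * v * star (a : ℍ), conj_mem _ v.2⟩
    map_add' := fun u v => by refine Subtype.ext ?_; simp [mul_add, add_mul]
    map_smul' := fun c v => by refine Subtype.ext ?_; simp [Algebra.mul_smul_comm, Algebra.smul_mul_assoc]
    invFun := fun v => ⟨star (a : ℍ) * v * (a : ℍ), by
      simpa using conj_mem (star (a : ℍ)) v.2⟩
    left_inv := fun v => by
      have h1 : star (a : ℍ) * a = 1 := Unitary.mem_iff.mp a.2 |>.1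
      have h2 : (a : ℍ) * star (a : ℍ) = 1 := Unitary.mem_iff.mp a.2 |>.2
      refine Subtype.ext ?_
      show _ = (v : ℍ)
      calc star (a:ℍ) * ((a:ℍ) * v * star (a:ℍ)) * a
          = (star (a:ℍ) * a) * v * (star (a:ℍ) * a) := by noncomm_ring
        _ = (v : ℍ) := by rw [h1]; simp
    right_inv := fun v => by
      have h1 : star (a : ℍ) * a = 1 := Unitary.mem_iff.mp a.2 |>.1
      have h2 : (a : ℍ) * star (a : ℍ) = 1 := Unitary.mem_iff.mp a.2 |>.2
      refine Subtype.ext ?_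
      show _ = (v : ℍ)
      calc (a:ℍ) * (star (a:ℍ) * v * a) * star (a:ℍ)
          = ((a:ℍ) * star (a:ℍ)) * v * ((a:ℍ) * star (a:ℍ)) := by noncomm_ring
        _ = (v : ℍ) := by rw [h2]; simp }
  norm_map' := fun v => by
    show ‖(a : ℍ) * v * star (a : ℍ)‖ = ‖(v : ℍ)‖
    rw [norm_mul, norm_mul, Quaternion.norm_star, unit_norm]
    ring

@[simp] lemma conjMap_apply (a : unitary ℍ) (v : imH) :
    (conjMap a v : ℍ) = (a : ℍ) * v * star (a : ℍ) := rfl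

def ρ : unitary ℍ →* (imH ≃ₗᵢ[ℝ] imH) where
  toFun := conjMap
  map_one' := by
    apply LinearIsometryEquiv.ext
    intro v
    refine Subtype.ext ?_
    simp
  map_mul' := fun x y => by
    apply LinearIsometryEquiv.ext
    intro v
    refine Subtype.ext ?_
    show ((x : ℍ) * y) * v * star ((x : ℍ) * y) = (x : ℍ) * ((y : ℍ) * v * star (y:ℍ)) * star (x:ℍ)
    rw [star_mul]
    noncomm_ring

abbrev mkQ (a b c d : ℝ) : ℍ := ⟨a,b,c,d⟩
def eI : imH := ⟨mkQ 0 1 0 0, rfl⟩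
def eJ : imH := ⟨mkQ 0 0 1 0, rfl⟩
def eK : imH := ⟨mkQ 0 0 0 1, rfl⟩

def imEquivFun : imH ≃ₗ[ℝ] (Fin 3 → ℝ) where
  toFun v := ![(v : ℍ).imI, (v : ℍ).imJ, (v : ℍ).imK]
  map_add' u v := by
    funext m
    fin_cases m <;> simp
  map_smul' c v := by
    funext m
    fin_cases m <;> simp
  invFun c := ⟨mkQ 0 (c 0) (c 1) (c 2), rfl⟩
  left_inv v := by
    refine Subtype.ext ?_
    have h : (v : ℍ).re = 0 := v.2
    exact Quaternion.ext _ _ h.symm rfl rfl rfl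
  right_inv c := by
    funext m
    fin_cases m <;> simp

def imBasis : Module.Basis (Fin 3) ℝ imH := Module.Basis.ofEquivFun imEquivFun

lemma imBasis_zero : imBasis 0 = eI := by
  rw [imBasis, Module.Basis.coe_ofEquivFun]
  refine Subtype.ext ?_
  refine Quaternion.ext _ _ ?_ ?_ ?_ ?_ <;> simp [imEquivFun, eI, Pi.single_apply]

lemma imBasis_one : imBasis 1 = eJ := by
  rw [imBasis, Module.Basis.coe_ofEquivFun]
  refine Subtype.ext ?_
  refine Quaternion.ext _ _ ?_ ?_ ?_ ?_ <;> simp [imEquivFun, eJ, Pi.single_apply]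

lemma imBasis_two : imBasis 2 = eK := by
  rw [imBasis, Module.Basis.coe_ofEquivFun]
  refine Subtype.ext ?_
  refine Quaternion.ext _ _ ?_ ?_ ?_ ?_ <;> simp [imEquivFun, eK, Pi.single_apply]

lemma det_formula (f : imH →ₗ[ℝ] imH) :
    LinearMap.det f = Matrix.det !![(f eI : ℍ).imI, (f eJ : ℍ).imI, (f eK : ℍ).imI;
      (f eI : ℍ).imJ, (f eJ : ℍ).imJ, (f eK : ℍ).imJ;
      (f eI : ℍ).imK, (f eJ : ℍ).imK, (f eK : ℍ).imK] := by
  rw [← LinearMap.det_toMatrix imBasis f]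
  congr 1
  refine Matrix.ext fun m n => ?_
  have hrepr : ∀ (w : imH) (m : Fin 3), imBasis.repr w m = imEquivFun w m := fun w m => rfl
  rw [LinearMap.toMatrix_apply, hrepr]
  fin_cases m <;> fin_cases n <;>
    simp [imBasis_zero, imBasis_one, imBasis_two, imEquivFun]


@[simp] lemma mk_re (a b c d : ℝ) : (mkQ a b c d).re = a := rfl
@[simp] lemma mk_imI (a b c d : ℝ) : (mkQ a b c d).imI = b := rfl
@[simp] lemma mk_imJ (a b c d : ℝ) : (mkQ a b c d).imJ = c := rfl
@[simp] lemma mk_imK (a b c d : ℝ) : (mkQ a b c d).imK = d := rfl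

lemma conj_eI (q : ℍ) : q * (eI : ℍ) * star q =
    mkQ 0 (q.re^2+q.imI^2-q.imJ^2-q.imK^2) (2*(q.imI*q.imJ+q.re*q.imK)) (2*(q.imI*q.imK-q.re*q.imJ)) := by
  refine Quaternion.ext _ _ ?_ ?_ ?_ ?_ <;>
    simp only [eI, Quaternion.re_mul, Quaternion.imI_mul, Quaternion.imJ_mul, Quaternion.imK_mul,
      Quaternion.re_star, Quaternion.imI_star, Quaternion.imJ_star, Quaternion.imK_star,
      mk_re, mk_imI, mk_imJ, mk_imK] <;> ring

lemma conj_eJ (q : ℍ) : q * (eJ : ℍ) * star q =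
    mkQ 0 (2*(q.imI*q.imJ-q.re*q.imK)) (q.re^2-q.imI^2+q.imJ^2-q.imK^2) (2*(q.imJ*q.imK+q.re*q.imI)) := by
  refine Quaternion.ext _ _ ?_ ?_ ?_ ?_ <;>
    simp only [eJ, Quaternion.re_mul, Quaternion.imI_mul, Quaternion.imJ_mul, Quaternion.imK_mul,
      Quaternion.re_star, Quaternion.imI_star, Quaternion.imJ_star, Quaternion.imK_star,
      mk_re, mk_imI, mk_imJ, mk_imK] <;> ring

lemma conj_eK (q : ℍ) : q * (eK : ℍ) * star q =
    mkQ 0 (2*(q.imI*q.imK+q.re*q.imJ)) (2*(q.imJ*q.imK-q.re*q.imI)) (q.re^2-q.imI^2-q.imJ^2+q.imK^2) := by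
  refine Quaternion.ext _ _ ?_ ?_ ?_ ?_ <;>
    simp only [eK, Quaternion.re_mul, Quaternion.imI_mul, Quaternion.imJ_mul, Quaternion.imK_mul,
      Quaternion.re_star, Quaternion.imI_star, Quaternion.imJ_star, Quaternion.imK_star,
      mk_re, mk_imI, mk_imJ, mk_imK] <;> ring

lemma det_conjMap (a : unitary ℍ) :
    LinearMap.det ((conjMap a).toLinearEquiv : imH →ₗ[ℝ] imH) = 1 := by
  have hs : (a:ℍ).re^2 + (a:ℍ).imI^2 + (a:ℍ).imJ^2 + (a:ℍ).imK^2 = 1 := by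
    have := unit_normSq a
    rw [Quaternion.normSq_def'] at this
    linarith [this]
  rw [det_formula]
  have he : ∀ v : imH, (((conjMap a).toLinearEquiv : imH →ₗ[ℝ] imH) v : ℍ)
      = (a:ℍ) * v * star (a:ℍ) := fun v => rfl
  simp only [he, conj_eI, conj_eJ, conj_eK, mk_re, mk_imI, mk_imJ, mk_imK]
  rw [Matrix.det_fin_three]
  simp only [Matrix.of_apply, Matrix.cons_val', Matrix.cons_val_zero, Matrix.cons_val_one,
    Matrix.head_cons, Matrix.empty_val', Matrix.cons_val_fin_one, Matrix.head_fin_const,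
    Matrix.cons_val_two, Matrix.tail_cons]
  linear_combination (((a:ℍ).re^2 + (a:ℍ).imI^2 + (a:ℍ).imJ^2 + (a:ℍ).imK^2)^2
    + ((a:ℍ).re^2 + (a:ℍ).imI^2 + (a:ℍ).imJ^2 + (a:ℍ).imK^2) + 1) * hs

lemma rho_eq_one_iff (a : unitary ℍ) : ρ a = 1 ↔ (a:ℍ) = 1 ∨ (a:ℍ) = -1 := by
  constructor
  · intro h
    have hs : (a:ℍ).re^2 + (a:ℍ).imI^2 + (a:ℍ).imJ^2 + (a:ℍ).imK^2 = 1 := by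
      have := unit_normSq a
      rw [Quaternion.normSq_def'] at this
      linarith [this]
    have hI : (a:ℍ) * (eI:ℍ) * star (a:ℍ) = (eI:ℍ) := by
      have h' : ρ a eI = eI := by rw [h]; rfl
      exact congrArg Subtype.val h'
    have hJ : (a:ℍ) * (eJ:ℍ) * star (a:ℍ) = (eJ:ℍ) := by
      have h' : ρ a eJ = eJ := by rw [h]; rfl
      exact congrArg Subtype.val h'
    rw [conj_eI] at hI
    rw [conj_eJ] at hJ
    have e1 : (a:ℍ).re^2 + (a:ℍ).imI^2 - (a:ℍ).imJ^2 - (a:ℍ).imK^2 = 1 := by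
      have := congrArg QuaternionAlgebra.imI hI; simpa [eI] using this
    have f2 : (a:ℍ).re^2 - (a:ℍ).imI^2 + (a:ℍ).imJ^2 - (a:ℍ).imK^2 = 1 := by
      have := congrArg QuaternionAlgebra.imJ hJ; simpa [eJ] using this
    have hy : (a:ℍ).imJ = 0 := by nlinarith [sq_nonneg ((a:ℍ).imJ), sq_nonneg ((a:ℍ).imK)]
    have hz : (a:ℍ).imK = 0 := by nlinarith [sq_nonneg ((a:ℍ).imJ), sq_nonneg ((a:ℍ).imK)]
    have hx : (a:ℍ).imI = 0 := by nlinarith [sq_nonneg ((a:ℍ).imI), sq_nonneg ((a:ℍ).imK)]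
    have hw : (a:ℍ).re = 1 ∨ (a:ℍ).re = -1 := by
      refine mul_self_eq_one_iff.mp ?_
      nlinarith
    rcases hw with hw | hw
    · left; refine Quaternion.ext _ _ ?_ ?_ ?_ ?_ <;> simp [hw, hx, hy, hz]
    · right; refine Quaternion.ext _ _ ?_ ?_ ?_ ?_ <;> simp [hw, hx, hy, hz]
  · intro h
    apply LinearIsometryEquiv.ext
    intro v
    refine Subtype.ext ?_
    show (a:ℍ) * v * star (a:ℍ) = (v:ℍ)
    rcases h with h | h <;> simp [h]

lemma det_trans (e f : imH ≃ₗᵢ[ℝ] imH) :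
    LinearMap.det (((e.trans f).toLinearEquiv : imH →ₗ[ℝ] imH))
      = LinearMap.det ((f.toLinearEquiv : imH →ₗ[ℝ] imH))
        * LinearMap.det ((e.toLinearEquiv : imH →ₗ[ℝ] imH)) := by
  rw [← LinearMap.det_comp]
  congr 1

lemma coe_inv (a : unitary ℍ) : ((a : ℍ))⁻¹ = star (a : ℍ) :=
  inv_eq_of_mul_eq_one_right (Unitary.mem_iff.mp a.2).2

lemma unitary_of_normSq (q : ℍ) (h : normSq q = 1) : q ∈ unitary ℍ := by
  constructor <;> simp [Quaternion.star_mul_self, Quaternion.self_mul_star, h]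

@[simp] lemma add_re' (q r : ℍ) : (q + r).re = q.re + r.re := rfl
@[simp] lemma add_imI' (q r : ℍ) : (q + r).imI = q.imI + r.imI := rfl
@[simp] lemma add_imJ' (q r : ℍ) : (q + r).imJ = q.imJ + r.imJ := rfl
@[simp] lemma add_imK' (q r : ℍ) : (q + r).imK = q.imK + r.imK := rfl

lemma inner_re (q r : ℍ) : (q * star r).re = q.re*r.re + q.imI*r.imI + q.imJ*r.imJ + q.imK*r.imK := by
  simp only [Quaternion.re_mul, Quaternion.re_star, Quaternion.imI_star, Quaternion.imJ_star,
    Quaternion.imK_star]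
  ring

lemma isom_pres (f : imH ≃ₗᵢ[ℝ] imH) (u v : imH) :
    (((f u : imH) : ℍ) * star ((f v : imH) : ℍ)).re = ((u:ℍ) * star (v:ℍ)).re := by
  have h := f.inner_map_map u v
  rw [Submodule.coe_inner, Submodule.coe_inner, Quaternion.inner_def, Quaternion.inner_def] at h
  exact h

lemma imH_decomp (v : imH) : v = (v:ℍ).imI • eI + (v:ℍ).imJ • eJ + (v:ℍ).imK • eK := by
  have hre : (v:ℍ).re = 0 := v.2
  refine Subtype.ext ?_
  refine Quaternion.ext _ _ ?_ ?_ ?_ ?_ <;>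
    simp [eI, eJ, eK, hre]

/-- conjugating a quaternion by a real multiple of another. -/
lemma conj_smul (r : ℝ) (u v : ℍ) : (r • u) * v * star (r • u) = (r^2) • (u * v * star u) := by
  rw [Quaternion.star_smul, smul_mul_assoc, smul_mul_assoc, mul_smul_comm, smul_smul, sq]

lemma exists_conj_eI_eq (p : imH) (hp : normSq (p:ℍ) = 1) :
    ∃ a : unitary ℍ, (a:ℍ) * (eI:ℍ) * star (a:ℍ) = (p:ℍ) := by
  have hre : (p:ℍ).re = 0 := p.2
  have hp1 : (p:ℍ).imI^2 + (p:ℍ).imJ^2 + (p:ℍ).imK^2 = 1 := by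
    rw [Quaternion.normSq_def'] at hp
    nlinarith [hp, hre]
  by_cases hx : (p:ℍ).imI = -1
  · have hy : (p:ℍ).imJ = 0 := by nlinarith [sq_nonneg ((p:ℍ).imJ), sq_nonneg ((p:ℍ).imK)]
    have hz : (p:ℍ).imK = 0 := by nlinarith [sq_nonneg ((p:ℍ).imJ), sq_nonneg ((p:ℍ).imK)]
    refine ⟨⟨(eJ:ℍ), unitary_of_normSq _ (by simp [eJ, Quaternion.normSq_def'])⟩, ?_⟩
    show (eJ:ℍ) * (eI:ℍ) * star (eJ:ℍ) = (p:ℍ)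
    rw [conj_eI]
    refine Quaternion.ext _ _ ?_ ?_ ?_ ?_ <;>
      simp [eJ, hre, hx, hy, hz]
  · have hxle : (p:ℍ).imI ≥ -1 := by nlinarith [sq_nonneg ((p:ℍ).imJ), sq_nonneg ((p:ℍ).imK), sq_nonneg ((p:ℍ).imI + 1)]
    have htpos : 0 < 2 + 2*(p:ℍ).imI := by
      rcases lt_or_eq_of_le hxle with h | h
      · linarith
      · exact absurd h.symm hx
    set u : ℍ := (eI:ℍ) + (p:ℍ) with hu
    have hcore : u * (eI:ℍ) * star u = (2 + 2*(p:ℍ).imI) • (p:ℍ) := by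
      rw [conj_eI]
      refine Quaternion.ext _ _ ?_ ?_ ?_ ?_ <;>
        simp only [hu, eI, add_re', add_imI', add_imJ', add_imK', mk_re, mk_imI, mk_imJ, mk_imK,
          Quaternion.re_smul, Quaternion.imI_smul, Quaternion.imJ_smul, Quaternion.imK_smul,
          smul_eq_mul, hre]
      · ring
      · linear_combination (-1 : ℝ) * hp1
      · ring
      · ring
    have hnormu : normSq u = 2 + 2*(p:ℍ).imI := by
      rw [Quaternion.normSq_def']
      simp only [hu, eI, add_re', add_imI', add_imJ', add_imK', mk_re, mk_imI, mk_imJ, mk_imK, hre]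
      linear_combination hp1
    set r : ℝ := (Real.sqrt (2 + 2*(p:ℍ).imI))⁻¹ with hr
    have hrsq : r^2 * (2 + 2*(p:ℍ).imI) = 1 := by
      rw [hr, inv_pow, Real.sq_sqrt htpos.le]
      exact inv_mul_cancel₀ (ne_of_gt htpos)
    have hnorm : normSq (r • u) = 1 := by
      rw [Quaternion.normSq_def']
      simp only [Quaternion.re_smul, Quaternion.imI_smul, Quaternion.imJ_smul, Quaternion.imK_smul,
        smul_eq_mul]
      have := hnormu
      rw [Quaternion.normSq_def'] at this
      nlinarith [this, hrsq]
    refine ⟨⟨r • u, unitary_of_normSq _ hnorm⟩, ?_⟩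
    show (r • u) * (eI:ℍ) * star (r • u) = (p:ℍ)
    rw [conj_smul, hcore, smul_smul, hrsq, one_smul]

lemma exists_conj_eJ_rot (y z : ℝ) (hyz : y^2 + z^2 = 1) :
    ∃ a : unitary ℍ, (a:ℍ) * (eI:ℍ) * star (a:ℍ) = (eI:ℍ) ∧
      (a:ℍ) * (eJ:ℍ) * star (a:ℍ) = mkQ 0 0 y z := by
  by_cases hy : y = -1
  · have hz : z = 0 := by nlinarith [sq_nonneg z]
    refine ⟨⟨(eI:ℍ), unitary_of_normSq _ (by simp [eI, Quaternion.normSq_def'])⟩, ?_, ?_⟩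
    · show (eI:ℍ) * (eI:ℍ) * star (eI:ℍ) = (eI:ℍ)
      rw [conj_eI]
      refine Quaternion.ext _ _ ?_ ?_ ?_ ?_ <;> simp [eI]
    · show (eI:ℍ) * (eJ:ℍ) * star (eI:ℍ) = _
      rw [conj_eJ]
      refine Quaternion.ext _ _ ?_ ?_ ?_ ?_ <;> simp [eI, hy, hz]
  · have hyge : y ≥ -1 := by nlinarith [sq_nonneg z, sq_nonneg (y+1)]
    have hypos : 0 < 1 + y := by
      rcases lt_or_eq_of_le hyge with h | h
      · linarith
      · exact absurd h.symm hy
    obtain ⟨c, hc2, hcpos⟩ : ∃ c : ℝ, c^2 = (1+y)/2 ∧ 0 < c :=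
      ⟨Real.sqrt ((1+y)/2), Real.sq_sqrt (by linarith), Real.sqrt_pos.mpr (by linarith)⟩
    obtain ⟨t, h2ct, ht2⟩ : ∃ t : ℝ, 2*c*t = z ∧ t^2 = (1-y)/2 := by
      refine ⟨z / (2*c), ?_, ?_⟩
      · field_simp
      · rw [div_pow]
        rw [div_eq_iff (by positivity)]
        have : (2*c)^2 = 2*(1+y) := by rw [mul_pow, hc2]; ring
        rw [this]
        nlinarith [hyz]
    have hnorm : normSq (mkQ c t 0 0) = 1 := by
      rw [Quaternion.normSq_def']
      simp only [mk_re, mk_imI, mk_imJ, mk_imK]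
      linear_combination hc2 + ht2
    refine ⟨⟨mkQ c t 0 0, unitary_of_normSq _ hnorm⟩, ?_, ?_⟩
    · rw [conj_eI]
      refine Quaternion.ext _ _ ?_ ?_ ?_ ?_ <;>
        simp only [eI, mk_re, mk_imI, mk_imJ, mk_imK]
      · linear_combination hc2 + ht2
      · ring
      · ring
    · rw [conj_eJ]
      refine Quaternion.ext _ _ ?_ ?_ ?_ ?_ <;>
        simp only [mk_re, mk_imI, mk_imJ, mk_imK]
      · ring
      · linear_combination hc2 - ht2
      · linear_combination h2ct

@[simp] lemma rho_apply (a : unitary ℍ) (v : imH) :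
    ((ρ a v : imH) : ℍ) = (a:ℍ) * (v:ℍ) * star (a:ℍ) := rfl

lemma det_rho (a : unitary ℍ) :
    LinearMap.det ((ρ a).toLinearEquiv : imH →ₗ[ℝ] imH) = 1 := det_conjMap a

lemma det_one' : LinearMap.det (((1 : imH ≃ₗᵢ[ℝ] imH).toLinearEquiv : imH →ₗ[ℝ] imH)) = 1 := by
  have : ((1 : imH ≃ₗᵢ[ℝ] imH).toLinearEquiv : imH →ₗ[ℝ] imH) = LinearMap.id := rfl
  rw [this, LinearMap.det_id]

lemma det_symm (e : imH ≃ₗᵢ[ℝ] imH)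
    (h : LinearMap.det ((e.toLinearEquiv : imH →ₗ[ℝ] imH)) = 1) :
    LinearMap.det ((e.symm.toLinearEquiv : imH →ₗ[ℝ] imH)) = 1 := by
  have h1 : e.trans e.symm = 1 := by
    apply LinearIsometryEquiv.ext
    intro v
    simp
  have := det_trans e e.symm
  rw [h1, det_one', h] at this
  linarith [this]

lemma fix_lemma (h : imH ≃ₗᵢ[ℝ] imH) (hI : h eI = eI) (hJ : h eJ = eJ)
    (hdet : LinearMap.det ((h.toLinearEquiv : imH →ₗ[ℝ] imH)) = 1) : h = 1 := by
  set v : imH := h eK with hv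
  have hre : (v:ℍ).re = 0 := v.2
  have h1 : (v:ℍ).imI = 0 := by
    have := isom_pres h eK eI
    rw [← hv, hI] at this
    rw [inner_re, inner_re] at this
    simpa [eI, eK, hre] using this
  have h2 : (v:ℍ).imJ = 0 := by
    have := isom_pres h eK eJ
    rw [← hv, hJ] at this
    rw [inner_re, inner_re] at this
    simpa [eJ, eK, hre] using this
  have h3 : (v:ℍ).imK = 1 := by
    have hd := hdet
    rw [det_formula] at hd
    have heI : ((h.toLinearEquiv : imH →ₗ[ℝ] imH) eI : ℍ) = (eI : ℍ) := by
      show ((h eI : imH) : ℍ) = _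
      rw [hI]
    have heJ : ((h.toLinearEquiv : imH →ₗ[ℝ] imH) eJ : ℍ) = (eJ : ℍ) := by
      show ((h eJ : imH) : ℍ) = _
      rw [hJ]
    have heK : ((h.toLinearEquiv : imH →ₗ[ℝ] imH) eK : ℍ) = (v : ℍ) := rfl
    rw [heI, heJ, heK, Matrix.det_fin_three] at hd
    simp only [eI, eJ, mk_re, mk_imI, mk_imJ, mk_imK, Matrix.of_apply, Matrix.cons_val',
      Matrix.cons_val_zero, Matrix.cons_val_one, Matrix.head_cons, Matrix.empty_val',
      Matrix.cons_val_fin_one, Matrix.head_fin_const, Matrix.cons_val_two, Matrix.tail_cons] at hd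
    linarith [hd]
  have hK : h eK = eK := by
    rw [← hv]
    refine Subtype.ext ?_
    refine Quaternion.ext _ _ ?_ ?_ ?_ ?_ <;> simp [eK, hre, h1, h2, h3]
  apply LinearIsometryEquiv.ext
  intro w
  have hw := imH_decomp w
  calc h w = h ((w:ℍ).imI • eI + (w:ℍ).imJ • eJ + (w:ℍ).imK • eK) := by rw [← hw]
    _ = (w:ℍ).imI • h eI + (w:ℍ).imJ • h eJ + (w:ℍ).imK • h eK := by
        rw [map_add, map_add, map_smul, map_smul, map_smul]
    _ = (w:ℍ).imI • eI + (w:ℍ).imJ • eJ + (w:ℍ).imK • eK := by rw [hI, hJ, hK]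
    _ = w := hw.symm

lemma normSq_image (f : imH ≃ₗᵢ[ℝ] imH) (v : imH) (hv : normSq (v:ℍ) = 1) :
    normSq ((f v : imH) : ℍ) = 1 := by
  have := isom_pres f v v
  rw [← Quaternion.normSq_def, ← Quaternion.normSq_def] at this
  rw [this, hv]

set_option maxHeartbeats 1000000 in
lemma exists_rho_eq (f : imH ≃ₗᵢ[ℝ] imH)
    (hdet : LinearMap.det ((f.toLinearEquiv : imH →ₗ[ℝ] imH)) = 1) : ∃ a, ρ a = f := by
  have hKnormSq : normSq ((eI : imH) : ℍ) = 1 := by simp [eI, Quaternion.normSq_def']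
  have hp : normSq ((f eI : imH) : ℍ) = 1 := normSq_image f eI hKnormSq
  obtain ⟨a₁, ha₁⟩ := exists_conj_eI_eq (f eI) hp
  set g : imH ≃ₗᵢ[ℝ] imH := f.trans (ρ a₁).symm with hg
  have hfI : f eI = ρ a₁ eI := Subtype.ext ha₁.symm
  have hgI : g eI = eI := by
    show (ρ a₁).symm (f eI) = eI
    rw [hfI, LinearIsometryEquiv.symm_apply_apply]
  have hdetg : LinearMap.det ((g.toLinearEquiv : imH →ₗ[ℝ] imH)) = 1 := by
    rw [hg, det_trans, hdet, det_symm _ (det_rho a₁), mul_one]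
  -- analyze g eJ
  set w : imH := g eJ with hw
  have hwre : (w:ℍ).re = 0 := w.2
  have hwI : (w:ℍ).imI = 0 := by
    have := isom_pres g eJ eI
    rw [← hw, hgI, inner_re, inner_re] at this
    simpa [eI, eJ, hwre] using this
  have hwn : (w:ℍ).imJ^2 + (w:ℍ).imK^2 = 1 := by
    have hn : normSq ((w:ℍ)) = 1 := normSq_image g eJ (by simp [eJ, Quaternion.normSq_def'])
    rw [Quaternion.normSq_def'] at hn
    nlinarith [hn, hwre, hwI]
  obtain ⟨a₂, ha₂I, ha₂J⟩ := exists_conj_eJ_rot ((w:ℍ).imJ) ((w:ℍ).imK) hwn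
  have hρI : ρ a₂ eI = eI := Subtype.ext ha₂I
  have hρJ : ρ a₂ eJ = w := by
    refine Subtype.ext ?_
    rw [rho_apply, ha₂J]
    refine (Quaternion.ext _ _ ?_ ?_ ?_ ?_).symm <;> simp [hwre, hwI]
  set k : imH ≃ₗᵢ[ℝ] imH := g.trans (ρ a₂).symm with hk
  have hkI : k eI = eI := by
    show (ρ a₂).symm (g eI) = eI
    rw [hgI]
    nth_rewrite 1 [← hρI]
    rw [LinearIsometryEquiv.symm_apply_apply]
  have hkJ : k eJ = eJ := by
    show (ρ a₂).symm (g eJ) = eJ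
    rw [← hw, ← hρJ, LinearIsometryEquiv.symm_apply_apply]
  have hdetk : LinearMap.det ((k.toLinearEquiv : imH →ₗ[ℝ] imH)) = 1 := by
    rw [hk, det_trans, hdetg, det_symm _ (det_rho a₂), mul_one]
  have hkone : k = 1 := fix_lemma k hkI hkJ hdetk
  refine ⟨a₁ * a₂, ?_⟩
  apply LinearIsometryEquiv.ext
  intro v
  have h1 : (ρ a₂).symm (g v) = v := by
    have hkv : k v = v := by rw [hkone]; rfl
    exact hkv
  have h2 : g v = ρ a₂ v := by
    have h2' := congrArg (ρ a₂) h1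
    rwa [LinearIsometryEquiv.apply_symm_apply] at h2'
  have h3 : (ρ a₁).symm (f v) = ρ a₂ v := h2
  have h4 : f v = ρ a₁ (ρ a₂ v) := by
    rw [← h3, LinearIsometryEquiv.apply_symm_apply]
  rw [map_mul]
  exact h4.symm

end
end QCA

/-- For a unit quaternion `a`, the conjugation `v ↦ a v a⁻¹` restricts to a linear isometry of
`im ℍ`; `a ↦ ρ(a)` is a group homomorphism from the unit quaternions whose kernel is `{1, -1}`
and whose image is exactly the linear isometries of `im ℍ` of determinant `1`. -/
theorem quaternion_conjAct_im :
    ∃ ρ : unitary ℍ →* (imH ≃ₗᵢ[ℝ] imH),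
      (∀ (a : unitary ℍ) (v : imH), (ρ a v : ℍ) = (a : ℍ) * (v : ℍ) * (a : ℍ)⁻¹) ∧
      (∀ a : unitary ℍ, ρ a = 1 ↔ (a : ℍ) = 1 ∨ (a : ℍ) = -1) ∧
      (∀ f : imH ≃ₗᵢ[ℝ] imH,
        (∃ a, ρ a = f) ↔ LinearMap.det (f.toLinearEquiv : imH →ₗ[ℝ] imH) = 1) := by
  refine ⟨QCA.ρ, ?_, ?_, ?_⟩
  · intro a v
    rw [QCA.coe_inv a]
    exact QCA.rho_apply a v
  · exact QCA.rho_eq_one_iff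
  · intro f
    constructor
    · rintro ⟨a, rfl⟩
      exact QCA.det_rho a
    · exact fun h => QCA.exists_rho_eq f h
end

section
/- For all purely imaginary quaternions h₁, h₂ the following identities hold in the exterior algebra of ℍ: Λ⁺(h₁) ∧ Λ⁺(h₂) = 8⟨h₁,h₂⟩ω, Λ⁻(h₁) ∧ Λ⁻(h₂) = −8⟨h₁,h₂⟩ω, and Λ⁺(h₁) ∧ Λ⁻(h₂) = 0. -/
open Quaternion

namespace QuaternionExterior

/-- The quaternion `i`. -/
def qI : ℍ := ⟨0, 1, 0, 0⟩
/-- The quaternion `j`. -/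
def qJ : ℍ := ⟨0, 0, 1, 0⟩
/-- The quaternion `k`. -/
def qK : ℍ := ⟨0, 0, 0, 1⟩

open ExteriorAlgebra

/-- `Λ⁺(h) = 1∧h + i∧(hi) + j∧(hj) + k∧(hk)` in the exterior algebra of `ℍ`. -/
noncomputable def Lplus (h : ℍ) : ExteriorAlgebra ℝ ℍ :=
  ι ℝ (1 : ℍ) * ι ℝ h + ι ℝ qI * ι ℝ (h * qI) + ι ℝ qJ * ι ℝ (h * qJ) + ι ℝ qK * ι ℝ (h * qK)

/-- `Λ⁻(h) = 1∧h + i∧(ih) + j∧(jh) + k∧(kh)` in the exterior algebra of `ℍ`. -/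
noncomputable def Lminus (h : ℍ) : ExteriorAlgebra ℝ ℍ :=
  ι ℝ (1 : ℍ) * ι ℝ h + ι ℝ qI * ι ℝ (qI * h) + ι ℝ qJ * ι ℝ (qJ * h) + ι ℝ qK * ι ℝ (qK * h)

/-- `ω = 1∧i∧j∧k`. -/
noncomputable def ω : ExteriorAlgebra ℝ ℍ := ι ℝ (1 : ℍ) * ι ℝ qI * ι ℝ qJ * ι ℝ qK

noncomputable def E0 : ExteriorAlgebra ℝ ℍ := ι ℝ (1 : ℍ)
noncomputable def E1 : ExteriorAlgebra ℝ ℍ := ι ℝ qI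
noncomputable def E2 : ExteriorAlgebra ℝ ℍ := ι ℝ qJ
noncomputable def E3 : ExteriorAlgebra ℝ ℍ := ι ℝ qK

lemma swap' (v w : ℍ) (x : ExteriorAlgebra ℝ ℍ) :
    ι ℝ v * (ι ℝ w * x) = -(ι ℝ w * (ι ℝ v * x)) := by
  have h := ι_add_mul_swap (R := ℝ) v w
  have : ι ℝ v * ι ℝ w = -(ι ℝ w * ι ℝ v) := eq_neg_of_add_eq_zero_left h
  rw [← mul_assoc, this, ← mul_assoc, neg_mul]

lemma sq' (v : ℍ) (x : ExteriorAlgebra ℝ ℍ) : ι ℝ v * (ι ℝ v * x) = 0 := by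
  rw [← mul_assoc, ι_sq_zero, zero_mul]

lemma ι_decomp (h : ℍ) :
    ι ℝ h = h.re • E0 + h.imI • E1 + h.imJ • E2 + h.imK • E3 := by
  have : h = h.re • (1:ℍ) + h.imI • qI + h.imJ • qJ + h.imK • qK := by
    ext <;> simp <;> simp [qI, qJ, qK]
  rw [this]
  simp [E0, E1, E2, E3] <;> simp [qI, qJ, qK]

@[simp] lemma swap10 (x : ExteriorAlgebra ℝ ℍ) : E1 * (E0 * x) = -(E0 * (E1 * x)) := swap' _ _ _
@[simp] lemma swap10' : E1 * E0 = -(E0 * E1) := eq_neg_of_add_eq_zero_left (ι_add_mul_swap _ _)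
@[simp] lemma swap20 (x : ExteriorAlgebra ℝ ℍ) : E2 * (E0 * x) = -(E0 * (E2 * x)) := swap' _ _ _
@[simp] lemma swap20' : E2 * E0 = -(E0 * E2) := eq_neg_of_add_eq_zero_left (ι_add_mul_swap _ _)
@[simp] lemma swap30 (x : ExteriorAlgebra ℝ ℍ) : E3 * (E0 * x) = -(E0 * (E3 * x)) := swap' _ _ _
@[simp] lemma swap30' : E3 * E0 = -(E0 * E3) := eq_neg_of_add_eq_zero_left (ι_add_mul_swap _ _)
@[simp] lemma swap21 (x : ExteriorAlgebra ℝ ℍ) : E2 * (E1 * x) = -(E1 * (E2 * x)) := swap' _ _ _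
@[simp] lemma swap21' : E2 * E1 = -(E1 * E2) := eq_neg_of_add_eq_zero_left (ι_add_mul_swap _ _)
@[simp] lemma swap31 (x : ExteriorAlgebra ℝ ℍ) : E3 * (E1 * x) = -(E1 * (E3 * x)) := swap' _ _ _
@[simp] lemma swap31' : E3 * E1 = -(E1 * E3) := eq_neg_of_add_eq_zero_left (ι_add_mul_swap _ _)
@[simp] lemma swap32 (x : ExteriorAlgebra ℝ ℍ) : E3 * (E2 * x) = -(E2 * (E3 * x)) := swap' _ _ _
@[simp] lemma swap32' : E3 * E2 = -(E2 * E3) := eq_neg_of_add_eq_zero_left (ι_add_mul_swap _ _)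
@[simp] lemma sq0 (x : ExteriorAlgebra ℝ ℍ) : E0 * (E0 * x) = 0 := sq' _ _
@[simp] lemma sq0' : E0 * E0 = 0 := ι_sq_zero _
@[simp] lemma sq1 (x : ExteriorAlgebra ℝ ℍ) : E1 * (E1 * x) = 0 := sq' _ _
@[simp] lemma sq1' : E1 * E1 = 0 := ι_sq_zero _
@[simp] lemma sq2 (x : ExteriorAlgebra ℝ ℍ) : E2 * (E2 * x) = 0 := sq' _ _
@[simp] lemma sq2' : E2 * E2 = 0 := ι_sq_zero _
@[simp] lemma sq3 (x : ExteriorAlgebra ℝ ℍ) : E3 * (E3 * x) = 0 := sq' _ _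
@[simp] lemma sq3' : E3 * E3 = 0 := ι_sq_zero _

set_option maxHeartbeats 1000000 in
lemma Lplus_eq (h : ℍ) (h0 : h.re = 0) :
    (ι ℝ (1 : ℍ) * ι ℝ h + ι ℝ qI * ι ℝ (h * qI) + ι ℝ qJ * ι ℝ (h * qJ)
      + ι ℝ qK * ι ℝ (h * qK) : ExteriorAlgebra ℝ ℍ)
    = (2*h.imI) • (E0*E1) + (2*h.imJ) • (E0*E2) + (2*h.imK) • (E0*E3)
      + (2*h.imK) • (E1*E2) + (-(2*h.imJ)) • (E1*E3) + (2*h.imI) • (E2*E3) := by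
  simp only [ι_decomp, Quaternion.re_mul, Quaternion.imI_mul, Quaternion.imJ_mul,
    Quaternion.imK_mul, h0]
  simp only [qI, qJ, qK]
  simp only [Quaternion.re_one, Quaternion.imI_one, Quaternion.imJ_one, Quaternion.imK_one,
    mul_zero, zero_mul, mul_one, one_mul, add_zero, zero_add, sub_zero, zero_sub, neg_zero,
    neg_neg, zero_smul, one_smul]
  simp only [mul_add, add_mul, smul_mul_assoc, mul_smul_comm, smul_smul,
    swap10', swap20', swap30', swap21', swap31', swap32',
    sq0', sq1', sq2', sq3',
    mul_neg, neg_mul, smul_neg, neg_neg, mul_zero, zero_mul, smul_zero, zero_smul,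
    add_zero, zero_add, neg_zero]
  module

set_option maxHeartbeats 1000000 in
lemma Lminus_eq (h : ℍ) (h0 : h.re = 0) :
    (ι ℝ (1 : ℍ) * ι ℝ h + ι ℝ qI * ι ℝ (qI * h) + ι ℝ qJ * ι ℝ (qJ * h)
      + ι ℝ qK * ι ℝ (qK * h) : ExteriorAlgebra ℝ ℍ)
    = (2*h.imI) • (E0*E1) + (2*h.imJ) • (E0*E2) + (2*h.imK) • (E0*E3)
      + (-(2*h.imK)) • (E1*E2) + (2*h.imJ) • (E1*E3) + (-(2*h.imI)) • (E2*E3) := by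
  simp only [ι_decomp, Quaternion.re_mul, Quaternion.imI_mul, Quaternion.imJ_mul,
    Quaternion.imK_mul, h0]
  simp only [qI, qJ, qK]
  simp only [Quaternion.re_one, Quaternion.imI_one, Quaternion.imJ_one, Quaternion.imK_one,
    mul_zero, zero_mul, mul_one, one_mul, add_zero, zero_add, sub_zero, zero_sub, neg_zero,
    neg_neg, zero_smul, one_smul]
  simp only [mul_add, add_mul, smul_mul_assoc, mul_smul_comm, smul_smul,
    swap10', swap20', swap30', swap21', swap31', swap32',
    sq0', sq1', sq2', sq3',
    mul_neg, neg_mul, smul_neg, neg_neg, mul_zero, zero_mul, smul_zero, zero_smul,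
    add_zero, zero_add, neg_zero]
  module

lemma ω_eq : ω = E0*(E1*(E2*E3)) := by
  simp only [ω, E0, E1, E2, E3, mul_assoc]

/-- For purely imaginary quaternions `h₁, h₂`:
`Λ⁺(h₁) ∧ Λ⁺(h₂) = 8⟨h₁,h₂⟩ω`, `Λ⁻(h₁) ∧ Λ⁻(h₂) = -8⟨h₁,h₂⟩ω` and `Λ⁺(h₁) ∧ Λ⁻(h₂) = 0`. -/
theorem lambda_wedge (h₁ h₂ : ℍ) (h1 : h₁.re = 0) (h2 : h₂.re = 0) :
    Lplus h₁ * Lplus h₂ = (8 * (inner ℝ h₁ h₂ : ℝ)) • ω ∧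
    Lminus h₁ * Lminus h₂ = (-(8 * (inner ℝ h₁ h₂ : ℝ))) • ω ∧
    Lplus h₁ * Lminus h₂ = 0 := by
  have hinner : (inner ℝ h₁ h₂ : ℝ) = h₁.imI * h₂.imI + h₁.imJ * h₂.imJ + h₁.imK * h₂.imK := by
    simp [Quaternion.inner_def, Quaternion.re_mul, h1, h2]
  refine ⟨?_, ?_, ?_⟩ <;>
  · simp only [Lplus, Lminus, hinner, Lplus_eq h₁ h1, Lplus_eq h₂ h2,
      Lminus_eq h₁ h1, Lminus_eq h₂ h2, ω_eq]
    simp only [mul_add, add_mul, smul_mul_assoc, mul_smul_comm, smul_smul, mul_assoc,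
      swap10, swap20, swap30, swap21, swap31, swap32,
      swap10', swap20', swap30', swap21', swap31', swap32',
      sq0, sq1, sq2, sq3, sq0', sq1', sq2', sq3',
      mul_neg, neg_mul, smul_neg, neg_neg, mul_zero, zero_mul, smul_zero, zero_smul, one_smul,
      add_zero, zero_add, neg_zero]
    module

end QuaternionExterior
end

section
/- An ℝ-linear isometric automorphism f of ℍⁿ belongs to TSp(ℍⁿ) if and only if there exist a unit quaternion a and g ∈ Sp(ℍⁿ) such that f(v) = a • g(v) for all v ∈ ℍⁿ. -/
open Quaternion

/-- `ℍⁿ`, the orthogonal direct sum of `n` copies of `ℍ`, as a real inner product space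
and left `ℍ`-module. -/
abbrev Hn (n : ℕ) := PiLp 2 (fun _ : Fin n => ℍ)

noncomputable section AuxTSp

def QI : ℍ := ⟨0,1,0,0⟩
def QJ : ℍ := ⟨0,0,1,0⟩

@[simp] lemma QI_re : QI.re = 0 := rfl
@[simp] lemma QI_imI : QI.imI = 1 := rfl
@[simp] lemma QI_imJ : QI.imJ = 0 := rfl
@[simp] lemma QI_imK : QI.imK = 0 := rfl
@[simp] lemma QJ_re : QJ.re = 0 := rfl
@[simp] lemma QJ_imI : QJ.imI = 0 := rfl
@[simp] lemma QJ_imJ : QJ.imJ = 1 := rfl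
@[simp] lemma QJ_imK : QJ.imK = 0 := rfl

lemma QI_mul_QI : QI * QI = -1 := by ext <;> simp [Quaternion.ext_iff]
lemma QJ_mul_QJ : QJ * QJ = -1 := by ext <;> simp [Quaternion.ext_iff]
lemma QJ_mul_QI : QJ * QI = -(QI * QJ) := by ext <;> simp

lemma quat_decomp (r : ℍ) : r = (r.re : ℍ) + r.imI • QI + r.imJ • QJ + r.imK • (QI * QJ) := by
  ext <;> simp

lemma stage1 (u : ℍ) (hu : u * u = -1) : ∃ b : ℍ, b ≠ 0 ∧ u * b = b * QI := by
  by_cases h : u = -QI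
  · refine ⟨QJ, ?_, ?_⟩
    · intro h0; simpa [Quaternion.ext_iff] using h0
    · subst h; ext <;> simp
  · refine ⟨u + QI, ?_, ?_⟩
    · intro h0
      apply h
      linear_combination (norm := module) h0
    · rw [mul_add, add_mul, hu, QI_mul_QI]; abel

lemma stage2 (w : ℍ) (hw : w * w = -1) (hanti : QI * w = -(w * QI)) :
    ∃ q : ℍ, q ≠ 0 ∧ QI * q = q * QI ∧ w * q = q * QJ := by
  have h1 : w.re = 0 ∧ w.imI = 0 := by
    rw [Quaternion.ext_iff] at hanti
    simp [Quaternion.re_mul, Quaternion.imI_mul] at hanti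
    constructor <;> linarith [hanti.1, hanti.2]
  obtain ⟨hre, himI⟩ := h1
  have hyz : w.imJ ^ 2 + w.imK ^ 2 = 1 := by
    rw [Quaternion.ext_iff] at hw
    simp [Quaternion.re_mul, hre, himI] at hw
    nlinarith [hw.1]
  by_cases hy : w.imJ = -1
  · have hz : w.imK = 0 := by nlinarith
    refine ⟨QI, ?_, rfl, ?_⟩
    · intro h0; simpa [Quaternion.ext_iff] using h0
    · ext <;> simp [hre, himI, hy, hz, Quaternion.re_mul, Quaternion.imI_mul,
        Quaternion.imJ_mul, Quaternion.imK_mul]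
  · have hy1 : 1 + w.imJ ≠ 0 := by
      intro h0; apply hy; linarith
    refine ⟨((1 + w.imJ : ℝ) : ℍ) + w.imK • QI, ?_, ?_, ?_⟩
    · intro h0
      rw [Quaternion.ext_iff] at h0
      exact hy1 (by simpa using h0.1)
    · ext <;> simp <;> ring
    · ext <;> simp [hre, himI, Quaternion.re_mul, Quaternion.imI_mul,
        Quaternion.imJ_mul, Quaternion.imK_mul] <;> nlinarith [hyz]

lemma skolem_noether (κ : ℍ ≃ₐ[ℝ] ℍ) : ∃ a₀ : ℍ, a₀ ≠ 0 ∧ ∀ r : ℍ, κ r * a₀ = a₀ * r := by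
  have hκcoe : ∀ x : ℝ, κ (x : ℍ) = (x : ℍ) := fun x => by
    simpa using κ.commutes x
  set u : ℍ := κ QI with hu_def
  set w0 : ℍ := κ QJ with hw0_def
  have huu : u * u = -1 := by
    rw [hu_def, ← map_mul, QI_mul_QI, map_neg, map_one]
  have hww : w0 * w0 = -1 := by
    rw [hw0_def, ← map_mul, QJ_mul_QJ, map_neg, map_one]
  have hanti0 : w0 * u = -(u * w0) := by
    rw [hu_def, hw0_def, ← map_mul, ← map_mul, QJ_mul_QI, map_neg]
  obtain ⟨b, hb0, hb⟩ := stage1 u huu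
  have hbc : ∀ x : ℍ, b * (b⁻¹ * x) = x := fun x => by
    rw [← mul_assoc, mul_inv_cancel₀ hb0, one_mul]
  have hbc' : ∀ x : ℍ, b⁻¹ * (b * x) = x := fun x => by
    rw [← mul_assoc, inv_mul_cancel₀ hb0, one_mul]
  set w : ℍ := b⁻¹ * w0 * b with hw_def
  have hbw : w0 * b = b * w := by
    rw [hw_def, ← mul_assoc, ← mul_assoc, mul_inv_cancel₀ hb0, one_mul]
  have hIb' : b⁻¹ * (u * b) = QI := by rw [hb]; exact hbc' QI
  have hww' : w * w = -1 := by
    rw [hw_def]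
    have h1 : w0 * (w0 * b) = -b := by rw [← mul_assoc, hww, neg_one_mul]
    simp only [mul_assoc, hbc, h1, mul_neg, inv_mul_cancel₀ hb0]
  have hanti : QI * w = -(w * QI) := by
    have hIw : QI * w = b⁻¹ * ((u * w0) * b) := by
      rw [← hIb', hw_def]
      simp only [mul_assoc, hbc]
    have hwI : w * QI = b⁻¹ * ((w0 * u) * b) := by
      rw [← hIb', hw_def]
      simp only [mul_assoc, hbc]
    rw [hIw, hwI, hanti0]
    simp only [neg_mul, mul_neg, neg_neg]
  obtain ⟨q, hq0, hqI, hqJ⟩ := stage2 w hww' hanti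
  refine ⟨b * q, mul_ne_zero hb0 hq0, ?_⟩
  have hua : u * (b * q) = b * q * QI := by
    rw [← mul_assoc, hb, mul_assoc, hqI, mul_assoc]
  have hwa : w0 * (b * q) = b * q * QJ := by
    rw [← mul_assoc, hbw, mul_assoc, hqJ, mul_assoc]
  have h3 : u * (w0 * (b * q)) = b * q * (QI * QJ) := by
    rw [hwa, ← mul_assoc, hua, mul_assoc, mul_assoc]
  intro r
  have hdec := quat_decomp r
  calc κ r * (b * q)
      = (↑r.re + r.imI • u + r.imJ • w0 + r.imK • (u * w0)) * (b * q) := by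
        conv_lhs => rw [hdec]
        simp only [map_add, map_smul, map_mul, hκcoe]
        rfl
    _ = ↑r.re * (b * q) + r.imI • (u * (b * q)) + r.imJ • (w0 * (b * q))
          + r.imK • (u * (w0 * (b * q))) := by
        simp only [add_mul, smul_mul_assoc, mul_assoc]
    _ = (b * q) * ↑r.re + r.imI • ((b * q) * QI) + r.imJ • ((b * q) * QJ)
          + r.imK • ((b * q) * (QI * QJ)) := by
        rw [h3, hua, hwa, coe_commutes]
    _ = (b * q) * r := by
        conv_rhs => rw [hdec]
        simp only [mul_add, mul_smul_comm]

/-- Left multiplication by a unit quaternion as a linear isometry equiv of `Hn n`. -/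
noncomputable def smulLIE (n : ℕ) (a : ℍ) (ha : ‖a‖ = 1) : Hn n ≃ₗᵢ[ℝ] Hn n where
  toLinearEquiv :=
  { toFun := fun v => a • v
    map_add' := fun u v => smul_add a u v
    map_smul' := fun c v => smul_comm a c v
    invFun := fun v => a⁻¹ • v
    left_inv := fun v => by
      have ha0 : a ≠ 0 := by intro h; rw [h] at ha; simp at ha
      show a⁻¹ • a • v = v
      rw [← mul_smul, inv_mul_cancel₀ ha0, one_smul]
    right_inv := fun v => by
      have ha0 : a ≠ 0 := by intro h; rw [h] at ha; simp at ha
      show a • a⁻¹ • v = v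
      rw [← mul_smul, mul_inv_cancel₀ ha0, one_smul] }
  norm_map' := fun v => by
    show ‖a • v‖ = ‖v‖
    rw [PiLp.norm_eq_of_L2, PiLp.norm_eq_of_L2]
    congr 1
    refine Finset.sum_congr rfl fun i _ => ?_
    show ‖a * v i‖ ^ 2 = _
    rw [norm_mul, ha, one_mul]

end AuxTSp

/-- An ℝ-linear isometric automorphism `f` of `ℍⁿ` lies in `TSp(ℍⁿ)` (i.e. is twisted
`ℍ`-linear for some automorphism of `ℍ`) iff `f = a • g` for some unit quaternion `a`
and some `ℍ`-linear isometry `g ∈ Sp(ℍⁿ)`. -/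
theorem mem_TSp_iff (n : ℕ) (f : Hn n ≃ₗᵢ[ℝ] Hn n) :
    (∃ κ : ℍ ≃ₐ[ℝ] ℍ, ∀ (r : ℍ) (v : Hn n), f (r • v) = κ r • f v) ↔
    ∃ (a : ℍ) (g : Hn n ≃ₗᵢ[ℝ] Hn n),
      (a * star a).re = 1 ∧ (∀ (r : ℍ) (v : Hn n), g (r • v) = r • g v) ∧
      ∀ v : Hn n, f v = a • g v := by
  constructor
  · rintro ⟨κ, hκ⟩
    obtain ⟨a₀, ha₀, hconj⟩ := skolem_noether κ
    set a : ℍ := (‖a₀‖⁻¹ : ℝ) • a₀ with ha_def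
    have ha : ‖a‖ = 1 := by
      rw [ha_def, norm_smul, norm_inv, norm_norm, inv_mul_cancel₀ (norm_ne_zero_iff.2 ha₀)]
    have hconj' : ∀ r : ℍ, κ r * a = a * r := fun r => by
      rw [ha_def, mul_smul_comm, smul_mul_assoc, hconj]
    have h1 : a * star a = 1 := by
      rw [self_mul_star, normSq_eq_norm_mul_self, ha, one_mul, coe_one]
    have h2 : star a * a = 1 := by
      rw [star_mul_self, normSq_eq_norm_mul_self, ha, one_mul, coe_one]
    have hκr : ∀ r : ℍ, κ r = a * r * star a := fun r => by
      have := congrArg (· * star a) (hconj' r)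
      simpa [mul_assoc, h1] using this
    refine ⟨a, f.trans (smulLIE n (star a) (by rw [norm_star, ha])), ?_, ?_, ?_⟩
    · rw [h1]; simp
    · intro r v
      show star a • f (r • v) = r • (star a • f v)
      rw [hκ, ← mul_smul, hκr, ← mul_smul]
      congr 1
      rw [← mul_assoc, ← mul_assoc, h2, one_mul]
    · intro v
      show f v = a • star a • f v
      rw [← mul_smul, h1, one_smul]
  · rintro ⟨a, g, hre, hglin, hfg⟩
    have hnsq : normSq a = 1 := by rw [normSq_def]; exact hre
    have h1 : a * star a = 1 := by rw [self_mul_star, hnsq, coe_one]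
    have h2 : star a * a = 1 := by rw [star_mul_self, hnsq, coe_one]
    have hca : ∀ x : ℍ, a * (star a * x) = x := fun x => by
      rw [← mul_assoc, h1, one_mul]
    have hcs : ∀ x : ℍ, star a * (a * x) = x := fun x => by
      rw [← mul_assoc, h2, one_mul]
    refine ⟨{ toFun := fun r => a * r * star a
              invFun := fun r => star a * r * a
              left_inv := fun r => by
                simp only [mul_assoc, hcs]
                rw [h2, mul_one]
              right_inv := fun r => by
                simp only [mul_assoc, hca]
                rw [h1, mul_one]
              map_mul' := fun r s => by simp only [mul_assoc, hcs]
              map_add' := fun r s => by simp only [mul_add, add_mul]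
              commutes' := fun c => by
                show a * algebraMap ℝ ℍ c * star a = algebraMap ℝ ℍ c
                rw [← Algebra.commutes c a, mul_assoc, h1, mul_one] }, ?_⟩
    intro r v
    show f (r • v) = (a * r * star a) • f v
    rw [hfg (r • v), hglin r v, hfg v, ← mul_smul, ← mul_smul]
    congr 1
    rw [mul_assoc (a * r), h2, mul_one]
end

section
/- Let V be a finite-dimensional complex inner product space admitting a nondegenerate skew-symmetric ℂ-bilinear form V × V → ℂ. Then V admits a quaternionic structure compatible with the metric: there exists an ℝ-linear map J : V → V that is conjugate-linear (J(z v) = (conj z) J(v)), satisfies J ∘ J = −id, and is anti-unitary (⟨J u, J v⟩ = ⟨v, u⟩ for all u, v ∈ V). -/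
open Module Finset

lemma even_finrank_of_skew_nondeg
    {V : Type*} [NormedAddCommGroup V] [InnerProductSpace ℂ V] [FiniteDimensional ℂ V]
    (f : V →ₗ[ℂ] V →ₗ[ℂ] ℂ)
    (hskew : ∀ u v : V, f v u = -f u v)
    (hnd : ∀ u : V, (∀ v : V, f u v = 0) → u = 0) :
    Even (finrank ℂ V) := by
  classical
  set n := finrank ℂ V
  let b : Basis (Fin n) ℂ V := Module.finBasis ℂ V
  let M := LinearMap.BilinForm.toMatrix b f
  have hdet : M.det ≠ 0 := by
    have hf : LinearMap.BilinForm.Nondegenerate f :=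
      (LinearMap.IsRefl.nondegenerate_iff_separatingLeft
        (fun x y h => by rw [hskew, h, neg_zero])).mpr hnd
    exact ((LinearMap.BilinForm.nondegenerate_iff_det_ne_zero b).mp hf)
  have hMT : M.transpose = -M := by
    ext i j
    simp only [Matrix.transpose_apply, Matrix.neg_apply, M,
      LinearMap.BilinForm.toMatrix_apply]
    exact hskew (b i) (b j)
  have h1 : M.det = (-1 : ℂ) ^ n * M.det := by
    conv_lhs => rw [← Matrix.det_transpose, hMT]
    rw [Matrix.det_neg]
    simp [n]
  have h2 : ((-1 : ℂ) ^ n) = 1 := by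
    have h3 : ((-1 : ℂ) ^ n - 1) * M.det = 0 := by
      rw [sub_mul, one_mul, ← h1, sub_self]
    rcases mul_eq_zero.mp h3 with h | h
    · exact sub_eq_zero.mp h
    · exact absurd h hdet
  exact (neg_one_pow_eq_one_iff_even (by norm_num : (-1 : ℂ) ≠ 1)).mp h2

/-- A finite-dimensional complex inner product space admitting a nondegenerate
skew-symmetric ℂ-bilinear form carries a quaternionic structure compatible with the metric:
a conjugate-linear map `J` with `J² = -1` which is anti-unitary
(`⟨Ju, Jv⟩ = ⟨v, u⟩`, expressed via Mathlib's inner product, which is conjugate-linear in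
its first variable, as `inner (J v) (J u) = inner u v`). -/
theorem symplectic_form_gives_quaternionic_structure
    {V : Type*} [NormedAddCommGroup V] [InnerProductSpace ℂ V] [FiniteDimensional ℂ V]
    (f : V →ₗ[ℂ] V →ₗ[ℂ] ℂ)
    (hskew : ∀ u v : V, f v u = -f u v)
    (hnd : ∀ u : V, (∀ v : V, f u v = 0) → u = 0) :
    ∃ J : V → V,
      (∀ u v : V, J (u + v) = J u + J v) ∧
      (∀ (z : ℂ) (v : V), J (z • v) = (starRingEnd ℂ z) • J v) ∧
      (∀ v : V, J (J v) = -v) ∧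
      (∀ u v : V, (inner ℂ (J v) (J u) : ℂ) = (inner ℂ u v : ℂ)) := by
  classical
  obtain ⟨m, hm⟩ := even_finrank_of_skew_nondeg f hskew hnd
  have hn : finrank ℂ V = m * 2 := by omega
  let e : Fin (finrank ℂ V) ≃ (Fin m × Bool) :=
    (finCongr hn).trans <| finProdFinEquiv.symm.trans <|
      Equiv.prodCongr (Equiv.refl _) finTwoEquiv
  let b : OrthonormalBasis (Fin m × Bool) ℂ V := (stdOrthonormalBasis ℂ V).reindex e
  let s : Bool → ℂ := fun d => if d then 1 else -1
  have hs_mul : ∀ d : Bool, s d * s (!d) = -1 := by intro d; cases d <;> norm_num [s]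
  have hs_sq : ∀ d : Bool, s d * s d = 1 := by intro d; cases d <;> norm_num [s]
  have hs_conj : ∀ d : Bool, (starRingEnd ℂ) (s d) = s d := by
    intro d; cases d <;> simp [s]
  -- the conjugate-linear map
  let J : V → V := fun v =>
    ∑ p : Fin m × Bool, (s p.2 * (starRingEnd ℂ) (inner ℂ (b (p.1, !p.2)) v : ℂ)) • b p
  -- coordinate of J v
  have hcoord : ∀ (v : V) (q : Fin m × Bool),
      (inner ℂ (b q) (J v) : ℂ) = s q.2 * (starRingEnd ℂ) (inner ℂ (b (q.1, !q.2)) v : ℂ) := by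
    intro v q
    simp only [J, inner_sum, inner_smul_right]
    rw [Finset.sum_eq_single q]
    · rw [orthonormal_iff_ite.mp b.orthonormal q q]
      simp
    · intro p _ hpq
      rw [orthonormal_iff_ite.mp b.orthonormal q p, if_neg (fun h => hpq h.symm)]
      simp
    · simp
  refine ⟨J, ?_, ?_, ?_, ?_⟩
  · intro u v
    simp only [J, inner_add_right, map_add, mul_add, add_smul]
    exact Finset.sum_add_distrib
  · intro z v
    simp only [J, inner_smul_right, map_mul, Finset.smul_sum, smul_smul]
    congr 1; ext p; ring_nf
  · intro v
    have : J (J v) = ∑ q : Fin m × Bool,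
        (s q.2 * (starRingEnd ℂ) (inner ℂ (b (q.1, !q.2)) (J v) : ℂ)) • b q := rfl
    rw [this]
    have : ∀ q : Fin m × Bool,
        (s q.2 * (starRingEnd ℂ) (inner ℂ (b (q.1, !q.2)) (J v) : ℂ)) • b q
          = -((inner ℂ (b q) v : ℂ) • b q) := by
      intro q
      rw [hcoord]
      have : (starRingEnd ℂ) (s (!q.2) * (starRingEnd ℂ) (inner ℂ (b ((q.1, !q.2).1, !(q.1, !q.2).2)) v : ℂ))
          = s (!q.2) * (inner ℂ (b (q.1, q.2)) v : ℂ) := by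
        simp [hs_conj]
      rw [this]
      have h2 : s q.2 * (s (!q.2) * (inner ℂ (b (q.1, q.2)) v : ℂ))
          = -(inner ℂ (b q) v : ℂ) := by
        rw [← mul_assoc, hs_mul]; ring
      rw [h2, neg_smul]
    rw [Finset.sum_congr rfl (fun q _ => this q), Finset.sum_neg_distrib]
    congr 1
    have := b.sum_repr v
    simp_rw [b.repr_apply_apply] at this
    exact this
  · intro u v
    have expand : (inner ℂ (J v) (J u) : ℂ)
        = ∑ q : Fin m × Bool, (s q.2 * (starRingEnd ℂ) (inner ℂ (b (q.1, !q.2)) u : ℂ))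
            * (inner ℂ (J v) (b q) : ℂ) := by
      simp only [J, inner_sum, inner_smul_right]
    rw [expand]
    have step : ∀ q : Fin m × Bool,
        (s q.2 * (starRingEnd ℂ) (inner ℂ (b (q.1, !q.2)) u : ℂ)) * (inner ℂ (J v) (b q) : ℂ)
          = (inner ℂ u (b (q.1, !q.2)) : ℂ) * (inner ℂ (b (q.1, !q.2)) v : ℂ) := by
      intro q
      have h1 : (inner ℂ (J v) (b q) : ℂ) = (starRingEnd ℂ) (inner ℂ (b q) (J v) : ℂ) := by
        rw [← inner_conj_symm]
      rw [h1, hcoord]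
      simp only [map_mul, hs_conj, RingHom.id_apply, starRingEnd_self_apply]
      rw [← inner_conj_symm u (b (q.1, !q.2))]
      ring_nf
      rw [sq, hs_sq, one_mul]
    rw [Finset.sum_congr rfl (fun q _ => step q)]
    have flipbij : Function.Bijective (fun q : Fin m × Bool => (q.1, !q.2)) := by
      refine Equiv.bijective ⟨fun q => (q.1, !q.2), fun q => (q.1, !q.2), ?_, ?_⟩ <;>
        (intro q; simp)
    rw [Fintype.sum_bijective _ flipbij _
      (fun p : Fin m × Bool => (inner ℂ u (b p) : ℂ) * (inner ℂ (b p) v : ℂ)) (fun q => rfl)]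
    exact b.sum_inner_mul_inner u v
end

section
/- Let V be a nonzero finite-dimensional left module over ℍ and let f : V → V be an ℍ-linear automorphism. Then the determinant of f regarded as an ℝ-linear endomorphism of the underlying real vector space of V is positive. (Hence any two ℍ-bases of V induce the same orientation of the underlying real vector space, giving every ℍ-module a canonical orientation.) -/
open Quaternion

/-- An `ℍ`-linear automorphism of a nonzero finite-dimensional left `ℍ`-module has positive
determinant as an ℝ-linear endomorphism of the underlying real vector space. -/
theorem quaternionic_automorphism_det_pos
    {V : Type*} [AddCommGroup V] [Module ℝ V] [Module ℍ V] [IsScalarTower ℝ ℍ V]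
    [Nontrivial V] [FiniteDimensional ℝ V]
    (f : V ≃ₗ[ℍ] V) :
    0 < LinearMap.det (f.toLinearMap.restrictScalars ℝ) := by
  classical
  -- embed ℂ into ℍ
  have hqi : (⟨0, 1, 0, 0⟩ : ℍ) * ⟨0, 1, 0, 0⟩ = -1 := by
    ext <;> simp
  let φ : ℂ →ₐ[ℝ] ℍ := Complex.liftAux ⟨0, 1, 0, 0⟩ hqi
  letI : Module ℂ V := Module.compHom V (φ.toRingHom : ℂ →+* ℍ)
  have hsmul : ∀ (z : ℂ) (v : V), z • v = φ z • v := fun _ _ => rfl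
  haveI : IsScalarTower ℝ ℂ V := ⟨fun r z v => by
    rw [hsmul, hsmul, map_smul, smul_assoc]⟩
  haveI : FiniteDimensional ℂ V := Module.Finite.of_restrictScalars_finite ℝ ℂ V
  -- f as a ℂ-linear map, with its inverse
  let g : V →ₗ[ℂ] V :=
    { toFun := f
      map_add' := fun a b => f.map_add a b
      map_smul' := fun z v => by
        simp only [RingHom.id_apply, hsmul]
        exact f.map_smul (φ z) v }
  let g' : V →ₗ[ℂ] V :=
    { toFun := f.symm
      map_add' := fun a b => f.symm.map_add a b
      map_smul' := fun z v => by
        simp only [RingHom.id_apply, hsmul]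
        exact f.symm.map_smul (φ z) v }
  have hgg' : g ∘ₗ g' = LinearMap.id := by
    apply LinearMap.ext
    intro v
    exact f.apply_symm_apply v
  set n := Module.finrank ℂ V with hn
  let c : Module.Basis (Fin n) ℂ V := Module.finBasis ℂ V
  -- the real determinant of a complex matrix acting on V
  let δ : Matrix (Fin n) (Fin n) ℂ → ℝ := fun M =>
    LinearMap.det ((Matrix.toLin c c M).restrictScalars ℝ)
  have hδone : δ 1 = 1 := by
    simp only [δ, Matrix.toLin_one]
    rw [show (LinearMap.id : V →ₗ[ℂ] V).restrictScalars ℝ = LinearMap.id from rfl]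
    exact LinearMap.det_id
  have hδmul : ∀ A B, δ (A * B) = δ A * δ B := by
    intro A B
    simp only [δ, Matrix.toLin_mul c c c]
    rw [LinearMap.restrictScalars_comp, LinearMap.det_comp]
  have hδne : ∀ M : Matrix (Fin n) (Fin n) ℂ, M.det ≠ 0 → δ M ≠ 0 := by
    intro M hM
    have hinv : M * M⁻¹ = 1 := Matrix.mul_nonsing_inv M (isUnit_iff_ne_zero.mpr hM)
    intro h0
    have : δ M * δ M⁻¹ = 1 := by rw [← hδmul, hinv, hδone]
    rw [h0, zero_mul] at this
    exact zero_ne_one this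
  have key : ∀ M : Matrix (Fin n) (Fin n) ℂ, M.det ≠ 0 → 0 < δ M := by
    intro M hM
    apply Matrix.diagonal_transvection_induction_of_det_ne_zero _ M hM
    · -- diagonal matrices
      intro D hD
      have hDi : ∀ i, D i ≠ 0 := by
        intro i hi
        apply hD
        rw [Matrix.det_diagonal]
        exact Finset.prod_eq_zero (Finset.mem_univ i) hi
      choose s hs using fun i => IsAlgClosed.exists_pow_nat_eq (D i) (n := 2) (by norm_num)
      have hsne : ∀ i, s i ≠ 0 := by
        intro i hi
        apply hDi i
        rw [← hs i, hi]
        simp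
      have hD2 : D = fun i => s i * s i := by
        funext i
        rw [← hs i]; ring
      have hfact : Matrix.diagonal D = Matrix.diagonal s * Matrix.diagonal s := by
        rw [Matrix.diagonal_mul_diagonal, hD2]
      rw [hfact, hδmul]
      have : δ (Matrix.diagonal s) ≠ 0 := by
        apply hδne
        rw [Matrix.det_diagonal]
        exact Finset.prod_ne_zero_iff.mpr fun i _ => hsne i
      exact mul_self_pos.mpr this
    · -- transvections
      intro t
      obtain ⟨i, j, hij, a⟩ := t
      have hfact : (Matrix.TransvectionStruct.mk i j hij a).toMatrix =
          Matrix.transvection i j (a / 2) * Matrix.transvection i j (a / 2) := by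
        rw [Matrix.transvection_mul_transvection_same (i := i) (j := j) hij (a/2) (a/2)]
        simp only [Matrix.TransvectionStruct.toMatrix_mk]
        norm_num
      rw [hfact, hδmul]
      have : δ (Matrix.transvection i j (a / 2)) ≠ 0 := by
        apply hδne
        rw [Matrix.det_transvection_of_ne i j hij]
        exact one_ne_zero
      exact mul_self_pos.mpr this
    · -- products
      intro A B _ _ hA hB
      rw [hδmul]
      exact mul_pos hA hB
  -- apply to the matrix of g
  set M := LinearMap.toMatrix c c g with hMdef
  have hMdet : M.det ≠ 0 := by
    have h1 : M * LinearMap.toMatrix c c g' = 1 := by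
      rw [hMdef, ← LinearMap.toMatrix_comp c c c, hgg', LinearMap.toMatrix_id]
    intro h0
    have := congrArg Matrix.det h1
    rw [Matrix.det_mul, h0, zero_mul, Matrix.det_one] at this
    exact zero_ne_one this
  have hpos := key M hMdet
  have hML : Matrix.toLin c c M = g := Matrix.toLin_toMatrix c c g
  have hfinal : ((Matrix.toLin c c M).restrictScalars ℝ) =
      f.toLinearMap.restrictScalars ℝ := by
    rw [hML]
    rfl
  have hpos' : 0 < LinearMap.det ((Matrix.toLin c c M).restrictScalars ℝ) := hpos
  rwa [hfinal] at hpos'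
end
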